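/- Let X be a Noetherian sober topological space and let V ⊆ X be a subset. Suppose that for every point x ∈ V there exists a locally closed subset L of X with x ∈ L ⊆ V, and that for every point x ∈ X \ V there exists a locally closed subset L of X with x ∈ L ⊆ X \ V. Then V is constructible, i.e. V is a finite union of locally closed subsets of X. -/

import Mathlib

open Set TopologicalSpace

/-- Let `X` be a Noetherian sober topological space and `V ⊆ X` a subset.
If every point of `V` has a locally closed neighborhood (in the sense of containment)
inside `V`, and every point of the complement of `V` has a locally closed set containing it
inside the complement, then `V` is constructible, i.e. a finite union of locally closed sets. -/
theorem constructible_of_locallyClosed_around_points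
    {X : Type*} [TopologicalSpace X] [TopologicalSpace.NoetherianSpace X]
    [T0Space X] [QuasiSober X] (V : Set X)
    (hV : ∀ x ∈ V, ∃ L : Set X, IsLocallyClosed L ∧ x ∈ L ∧ L ⊆ V)
    (hVc : ∀ x ∈ Vᶜ, ∃ L : Set X, IsLocallyClosed L ∧ x ∈ L ∧ L ⊆ Vᶜ) :
    ∃ s : Finset (Set X), (∀ L ∈ s, IsLocallyClosed L) ∧ V = ⋃₀ ↑s := by
  classical
  have key : ∀ Z : Closeds X, ∃ s : Finset (Set X),
      (∀ L ∈ s, IsLocallyClosed L) ∧ V ∩ (Z : Set X) = ⋃₀ ↑s := by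
    intro Z
    refine (wellFounded_lt (α := Closeds X)).induction
      (C := fun Z => ∃ s : Finset (Set X),
        (∀ L ∈ s, IsLocallyClosed L) ∧ V ∩ (Z : Set X) = ⋃₀ ↑s) Z ?_
    clear Z
    intro Z ih
    by_cases hZe : (Z : Set X) = ∅
    · exact ⟨∅, by simp, by simp [hZe]⟩
    have hZne : (Z : Set X).Nonempty := Set.nonempty_iff_ne_empty.mpr hZe
    by_cases hirr : IsPreirreducible (Z : Set X)
    · -- Z is irreducible; take its generic point
      have hZirr : IsIrreducible (Z : Set X) := ⟨hZne, hirr⟩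
      set η := hZirr.genericPoint with hη
      have hηZ : closure ({η} : Set X) = (Z : Set X) :=
        hZirr.closure_genericPoint Z.isClosed
      have hηmem : η ∈ (Z : Set X) := by
        rw [← hηZ]; exact subset_closure rfl
      by_cases hηV : η ∈ V
      · obtain ⟨L, ⟨U, C, hU, hC, rfl⟩, hxL, hLV⟩ := hV η hηV
        -- Z ⊆ C
        have hZC : (Z : Set X) ⊆ C := by
          rw [← hηZ]
          exact closure_minimal (Set.singleton_subset_iff.mpr hxL.2) hC
        have hUZ : U ∩ (Z : Set X) ⊆ V := fun x hx => hLV ⟨hx.1, hZC hx.2⟩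
        -- smaller closed set
        set Z' : Closeds X := ⟨(Z : Set X) ∩ Uᶜ, Z.isClosed.inter hU.isClosed_compl⟩ with hZ'
        have hlt : Z' < Z := by
          refine lt_of_le_of_ne (fun x hx => hx.1) ?_
          intro h
          have : η ∈ (Z' : Set X) := by rw [h]; exact hηmem
          exact this.2 hxL.1
        obtain ⟨s, hs, hVZ'⟩ := ih Z' hlt
        refine ⟨insert (U ∩ (Z : Set X)) s, ?_, ?_⟩
        · intro L hL
          rcases Finset.mem_insert.mp hL with rfl | hL
          · exact ⟨U, Z, hU, Z.isClosed, rfl⟩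
          · exact hs L hL
        · push_cast [Finset.coe_insert]
          rw [Set.sUnion_insert, ← hVZ']
          ext x
          constructor
          · rintro ⟨hxV, hxZ⟩
            by_cases hxU : x ∈ U
            · exact Or.inl ⟨hxU, hxZ⟩
            · exact Or.inr ⟨hxV, hxZ, hxU⟩
          · rintro (⟨hxU, hxZ⟩ | ⟨hxV, hxZ, _⟩)
            · exact ⟨hUZ ⟨hxU, hxZ⟩, hxZ⟩
            · exact ⟨hxV, hxZ⟩
      · obtain ⟨L, ⟨U, C, hU, hC, rfl⟩, hxL, hLV⟩ := hVc η hηV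
        have hZC : (Z : Set X) ⊆ C := by
          rw [← hηZ]
          exact closure_minimal (Set.singleton_subset_iff.mpr hxL.2) hC
        have hUZ : U ∩ (Z : Set X) ⊆ Vᶜ := fun x hx => hLV ⟨hx.1, hZC hx.2⟩
        set Z' : Closeds X := ⟨(Z : Set X) ∩ Uᶜ, Z.isClosed.inter hU.isClosed_compl⟩ with hZ'
        have hlt : Z' < Z := by
          refine lt_of_le_of_ne (fun x hx => hx.1) ?_
          intro h
          have : η ∈ (Z' : Set X) := by rw [h]; exact hηmem
          exact this.2 hxL.1
        obtain ⟨s, hs, hVZ'⟩ := ih Z' hlt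
        refine ⟨s, hs, ?_⟩
        rw [← hVZ']
        ext x
        constructor
        · rintro ⟨hxV, hxZ⟩
          refine ⟨hxV, hxZ, fun hxU => hUZ ⟨hxU, hxZ⟩ hxV⟩
        · rintro ⟨hxV, hxZ, _⟩
          exact ⟨hxV, hxZ⟩
    · -- Z not preirreducible: split into two smaller closed pieces
      rw [isPreirreducible_iff_isClosed_union_isClosed] at hirr
      push_neg at hirr
      obtain ⟨C₁, C₂, hC₁, hC₂, hsub, hn₁, hn₂⟩ := hirr
      set Z₁ : Closeds X := ⟨(Z : Set X) ∩ C₁, Z.isClosed.inter hC₁⟩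
      set Z₂ : Closeds X := ⟨(Z : Set X) ∩ C₂, Z.isClosed.inter hC₂⟩
      have hlt₁ : Z₁ < Z := by
        refine lt_of_le_of_ne (fun x hx => hx.1) ?_
        intro h
        exact hn₁ (fun x hx => (h ▸ hx : x ∈ (Z₁ : Set X)).2)
      have hlt₂ : Z₂ < Z := by
        refine lt_of_le_of_ne (fun x hx => hx.1) ?_
        intro h
        exact hn₂ (fun x hx => (h ▸ hx : x ∈ (Z₂ : Set X)).2)
      obtain ⟨s₁, hs₁, h₁⟩ := ih Z₁ hlt₁
      obtain ⟨s₂, hs₂, h₂⟩ := ih Z₂ hlt₂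
      refine ⟨s₁ ∪ s₂, ?_, ?_⟩
      · intro L hL
        rcases Finset.mem_union.mp hL with hL | hL
        · exact hs₁ L hL
        · exact hs₂ L hL
      · push_cast [Finset.coe_union]
        rw [Set.sUnion_union, ← h₁, ← h₂]
        ext x
        constructor
        · rintro ⟨hxV, hxZ⟩
          rcases hsub hxZ with h | h
          · exact Or.inl ⟨hxV, hxZ, h⟩
          · exact Or.inr ⟨hxV, hxZ, h⟩
        · rintro (⟨hxV, hxZ, _⟩ | ⟨hxV, hxZ, _⟩) <;> exact ⟨hxV, hxZ⟩
  obtain ⟨s, hs, hVs⟩ := key ⊤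
  exact ⟨s, hs, by simpa using hVs⟩
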